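/- arXiv:1809.01236 — 2 statements merged into one kernel-verified Lean document; each statement's English description precedes it below -/
import Mathlib

section
/- Let u, v ∈ ℝ^n be vectors with nonnegative entries satisfying ‖u‖₁ = ‖v‖₁ = 1. Then max over pairs j ≠ k of the squared 2×2 determinant |u_j v_k − u_k v_j|² is at least ‖u − v‖₁² / (4 n⁵). -/
private lemma avg_le_aux {n : ℕ} (hn : 0 < n) (w : Fin n → ℝ) :
    ∃ m : Fin n, ∑ i, w i ≤ (n : ℝ) * w m := by
  by_contra h
  push_neg at h
  have hnR : (0:ℝ) < n := by exact_mod_cast hn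
  have hne : (Finset.univ : Finset (Fin n)).Nonempty := ⟨⟨0, hn⟩, Finset.mem_univ _⟩
  have key : ∀ m : Fin n, w m < (∑ i, w i) / n := by
    intro m
    rw [lt_div_iff₀ hnR]
    have := h m
    linarith
  have h2 := Finset.sum_lt_sum_of_nonempty hne (fun i _ => key i)
  rw [Finset.sum_const, Finset.card_univ, Fintype.card_fin, nsmul_eq_mul,
    mul_div_cancel₀ _ (ne_of_gt hnR)] at h2
  exact lt_irrefl _ h2

set_option maxHeartbeats 1000000 in
/-- Klopp's determinant lemma: for nonnegative vectors `u, v` with `‖u‖₁ = ‖v‖₁ = 1`,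
some 2×2 minor squared is at least `‖u − v‖₁² / (4 n⁵)`. -/
theorem stmt_1 (n : ℕ) (hn : 2 ≤ n) (u v : Fin n → ℝ)
    (hu : ∀ i, 0 ≤ u i) (hv : ∀ i, 0 ≤ v i)
    (hu1 : ∑ i, u i = 1) (hv1 : ∑ i, v i = 1) :
    ∃ j k : Fin n, j ≠ k ∧
      (∑ i, |u i - v i|) ^ 2 / (4 * (n : ℝ) ^ 5) ≤ (u j * v k - u k * v j) ^ 2 := by
  have hn0 : 0 < n := by omega
  have hN : (0:ℝ) < (n:ℝ) := by exact_mod_cast hn0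
  set N : ℝ := (n : ℝ) with hNdef
  set d : ℝ := ∑ i, |u i - v i| with hd
  have hd0 : 0 ≤ d := Finset.sum_nonneg fun i _ => abs_nonneg _
  rcases eq_or_lt_of_le hd0 with hdz | hdpos
  · -- degenerate case d = 0
    refine ⟨⟨0, by omega⟩, ⟨1, by omega⟩, by simp [Fin.ext_iff], ?_⟩
    rw [← hdz]
    have : (0:ℝ)^2 / (4 * N^5) = 0 := by
      simp
    rw [this]
    positivity
  · -- main case
    have hsumuv : ∑ i, (u i - v i) = 0 := by
      rw [Finset.sum_sub_distrib, hu1, hv1]; ring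
    -- sum of positive parts is d/2
    have habs : ∀ x : ℝ, |x| = 2 * max x 0 - x := by
      intro x
      rcases le_total x 0 with h | h
      · rw [abs_of_nonpos h, max_eq_right h]; ring
      · rw [abs_of_nonneg h, max_eq_left h]; ring
    have hpos : ∑ i, max (u i - v i) 0 = d / 2 := by
      have : d = ∑ i, (2 * max (u i - v i) 0 - (u i - v i)) := by
        rw [hd]; exact Finset.sum_congr rfl fun i _ => habs _
      rw [Finset.sum_sub_distrib, ← Finset.mul_sum, hsumuv] at this
      linarith
    have hneg : ∑ i, max (v i - u i) 0 = d / 2 := by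
      have hds : d = ∑ i, |v i - u i| := by
        rw [hd]; exact Finset.sum_congr rfl fun i _ => (abs_sub_comm _ _)
      have hsumvu : ∑ i, (v i - u i) = 0 := by
        rw [Finset.sum_sub_distrib, hu1, hv1]; ring
      have : d = ∑ i, (2 * max (v i - u i) 0 - (v i - u i)) := by
        rw [hds]; exact Finset.sum_congr rfl fun i _ => habs _
      rw [Finset.sum_sub_distrib, ← Finset.mul_sum, hsumvu] at this
      linarith
    -- find j with d ≤ 2N(u j - v j)
    obtain ⟨j, hj⟩ := avg_le_aux hn0 (fun i => max (u i - v i) 0)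
    rw [hpos] at hj
    have hj' : d ≤ 2 * N * (u j - v j) := by
      have hmaxpos : 0 < max (u j - v j) 0 := by
        by_contra hc
        push_neg at hc
        have : max (u j - v j) 0 = 0 := le_antisymm hc (le_max_right _ _)
        rw [this] at hj
        simp at hj
        linarith
      have : max (u j - v j) 0 = u j - v j := by
        rcases max_cases (u j - v j) 0 with ⟨h1, _⟩ | ⟨h1, _⟩
        · exact h1
        · rw [h1] at hmaxpos; exact absurd hmaxpos (lt_irrefl 0)
      rw [this] at hj
      linarith
    -- find k with d ≤ 2N(v k - u k)
    obtain ⟨k, hk⟩ := avg_le_aux hn0 (fun i => max (v i - u i) 0)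
    rw [hneg] at hk
    have hk' : d ≤ 2 * N * (v k - u k) := by
      have hmaxpos : 0 < max (v k - u k) 0 := by
        by_contra hc
        push_neg at hc
        have : max (v k - u k) 0 = 0 := le_antisymm hc (le_max_right _ _)
        rw [this] at hk
        simp at hk
        linarith
      have : max (v k - u k) 0 = v k - u k := by
        rcases max_cases (v k - u k) 0 with ⟨h1, _⟩ | ⟨h1, _⟩
        · exact h1
        · rw [h1] at hmaxpos; exact absurd hmaxpos (lt_irrefl 0)
      rw [this] at hk
      linarith
    -- find m with 2 ≤ N(u m + v m)
    obtain ⟨m, hm⟩ := avg_le_aux hn0 (fun i => u i + v i)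
    have hm' : (2:ℝ) ≤ N * (u m + v m) := by
      have : ∑ i, (u i + v i) = 2 := by
        rw [Finset.sum_add_distrib, hu1, hv1]; norm_num
      rw [this] at hm
      exact hm
    have hN1 : (1:ℝ) ≤ N := by
      have h1 : (1:ℝ) ≤ (n:ℝ) := by exact_mod_cast (by omega : (1:ℕ) ≤ n)
      rw [hNdef]; exact h1
    -- final arithmetic lemma
    have final : ∀ t : ℝ, d ≤ 2 * N^2 * t → d^2 / (4 * N^5) ≤ t^2 := by
      intro t ht
      rw [div_le_iff₀ (by positivity)]
      have h4 : d * d ≤ (2 * N^2 * t) * (2 * N^2 * t) :=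
        mul_self_le_mul_self hd0 ht
      nlinarith [sq_nonneg t, mul_nonneg (mul_nonneg (pow_nonneg hN.le 4) (sq_nonneg t))
        (by linarith : (0:ℝ) ≤ N - 1)]
    rcases le_total (v m) (u m) with hcase | hcase
    · -- u m ≥ v m : use pair (m, k)
      have hNum : (0:ℝ) ≤ N * (u m - v m) :=
        mul_nonneg hN.le (by linarith)
      have hum : 1 ≤ N * u m := by nlinarith [hNum]
      have hmk : m ≠ k := by
        intro h
        subst h
        nlinarith [hNum]
      refine ⟨m, k, hmk, final _ ?_⟩
      -- d ≤ 2N²(u m * v k - u k * v m)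
      have h5 : d ≤ N * u m * (2 * N * (v k - u k)) := by
        have := le_mul_of_one_le_left (by linarith : (0:ℝ) ≤ 2 * N * (v k - u k)) hum
        linarith
      have h6 : (0:ℝ) ≤ N^2 * (u k * (u m - v m)) := by
        have := mul_nonneg (hu k) (by linarith : (0:ℝ) ≤ u m - v m)
        positivity
      nlinarith [h5, h6]
    · -- v m ≥ u m : use pair (j, m)
      have hNvm : (0:ℝ) ≤ N * (v m - u m) :=
        mul_nonneg hN.le (by linarith)
      have hvm : 1 ≤ N * v m := by nlinarith [hNvm]
      have hjm : j ≠ m := by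
        intro h
        subst h
        nlinarith [hNvm]
      refine ⟨j, m, hjm, final _ ?_⟩
      have h5 : d ≤ N * v m * (2 * N * (u j - v j)) := by
        have := le_mul_of_one_le_left (by linarith : (0:ℝ) ≤ 2 * N * (u j - v j)) hvm
        linarith
      have h6 : (0:ℝ) ≤ N^2 * (v j * (v m - u m)) := by
        have := mul_nonneg (hv j) (by linarith : (0:ℝ) ≤ v m - u m)
        positivity
      nlinarith [h5, h6]
end

section
/- Let A be an n×n Hermitian matrix and P an orthogonal projection of rank r. Then the function t ↦ det(A + t P − E·I) is a polynomial in t of degree at most r. -/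
open Polynomial
lemma det_natDegree_le {n : ℕ} (M : Matrix (Fin n) (Fin n) (Polynomial ℂ))
    (S : Finset (Fin n))
    (h : ∀ i j, (M i j).natDegree ≤ if i = j ∧ i ∈ S then 1 else 0) :
    M.det.natDegree ≤ S.card := by
  rw [Matrix.det_apply']
  refine Polynomial.natDegree_sum_le_of_forall_le Finset.univ _ (fun σ _ => ?_)
  refine le_trans (Polynomial.natDegree_mul_le) ?_
  rw [Polynomial.natDegree_intCast, zero_add]
  refine le_trans (Polynomial.natDegree_prod_le _ _) ?_
  calc ∑ j, (M (σ j) j).natDegree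
      ≤ ∑ j, (if j ∈ S then 1 else 0) := by
        refine Finset.sum_le_sum fun j _ => le_trans (h (σ j) j) ?_
        by_cases hj : j ∈ S
        · split_ifs <;> simp [hj]
        · have hc : ¬(σ j = j ∧ σ j ∈ S) := fun hc => hj (hc.1 ▸ hc.2)
          simp [hc, hj]
    _ = S.card := by simp

open scoped Matrix

/-- For a Hermitian matrix `A` and an orthogonal projection `P` of rank `r`,
`t ↦ det(A + t P − E·I)` is a polynomial of degree at most `r`. -/
theorem stmt_8 (n : ℕ) (A P : Matrix (Fin n) (Fin n) ℂ)
    (hA : A.IsHermitian) (hPidem : P * P = P) (hPsa : Pᴴ = P)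
    (r : ℕ) (hr : P.rank = r) (E : ℝ) :
    ∃ p : Polynomial ℂ, p.natDegree ≤ r ∧
      ∀ t : ℝ, (A + (t : ℂ) • P - (E : ℂ) • (1 : Matrix (Fin n) (Fin n) ℂ)).det
        = p.eval (t : ℂ) := by
  classical
  have hP : P.IsHermitian := hPsa
  set U : Matrix (Fin n) (Fin n) ℂ :=
    (Matrix.IsHermitian.eigenvectorUnitary hP : Matrix (Fin n) (Fin n) ℂ) with hU
  have hUU : star U * U = 1 :=
    (Matrix.mem_unitaryGroup_iff').mp (Matrix.IsHermitian.eigenvectorUnitary hP).2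
  set d : Fin n → ℂ := fun i => (hP.eigenvalues i : ℂ) with hd
  have hspec : P = U * Matrix.diagonal d * star U := hP.spectral_theorem
  have hdiag : star U * P * U = Matrix.diagonal d := by
    rw [hspec, mul_assoc, mul_assoc, hUU, mul_one, ← mul_assoc, hUU, one_mul]
  set B : Matrix (Fin n) (Fin n) ℂ :=
    star U * (A - (E : ℂ) • (1 : Matrix (Fin n) (Fin n) ℂ)) * U with hB
  set S : Finset (Fin n) := Finset.univ.filter (fun i => d i ≠ 0) with hS
  have hScard : S.card = r := by
    rw [← hr, hP.rank_eq_card_non_zero_eigs, Fintype.card_subtype]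
    congr 1
    apply Finset.filter_congr
    intro i _
    simp [hd, Complex.ofReal_eq_zero]
  set M : Matrix (Fin n) (Fin n) (Polynomial ℂ) :=
    fun i j => Polynomial.C (B i j) +
      (if i = j then Polynomial.C (d i) * Polynomial.X else 0) with hM
  refine ⟨M.det, ?_, ?_⟩
  · rw [← hScard]
    refine det_natDegree_le M S ?_
    intro i j
    by_cases hij : i = j
    · by_cases hdi : d i = 0
      · have hdj : d j = 0 := hij ▸ hdi
        simp only [hM, hij, if_pos rfl]
        subst hij
        simp [hdi]
      · have hiS : i ∈ S := by simp [hS, hdi]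
        rw [if_pos ⟨hij, hiS⟩]
        simp only [hM, hij, if_pos rfl]
        subst hij
        refine le_trans (Polynomial.natDegree_add_le _ _) ?_
        simp only [Polynomial.natDegree_C, max_le_iff]
        refine ⟨Nat.zero_le _, le_trans (Polynomial.natDegree_mul_le) ?_⟩
        simp
    · simp [hM, hij]
  · intro t
    have key : star U * (A + (t : ℂ) • P - (E : ℂ) • (1 : Matrix (Fin n) (Fin n) ℂ)) * U
        = B + (t : ℂ) • Matrix.diagonal d := by
      have expand : A + (t : ℂ) • P - (E : ℂ) • (1 : Matrix (Fin n) (Fin n) ℂ)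
          = (A - (E : ℂ) • (1 : Matrix (Fin n) (Fin n) ℂ)) + (t : ℂ) • P := by
        abel
      rw [expand, Matrix.mul_add, Matrix.add_mul, hB, ← hdiag,
        Matrix.mul_smul, Matrix.smul_mul]
    have hdetU : (star U).det * U.det = 1 := by
      rw [← Matrix.det_mul, hUU, Matrix.det_one]
    have hdets : (A + (t : ℂ) • P - (E : ℂ) • (1 : Matrix (Fin n) (Fin n) ℂ)).det
        = (B + (t : ℂ) • Matrix.diagonal d).det := by
      have h2 := congrArg Matrix.det key
      rw [Matrix.det_mul, Matrix.det_mul] at h2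
      rw [← h2]
      have h3 : (star U).det * (A + (t : ℂ) • P - (E : ℂ) • 1).det * U.det
          = ((star U).det * U.det) * (A + (t : ℂ) • P - (E : ℂ) • 1).det := by ring
      rw [h3, hdetU, one_mul]
    have hMeval : M.map (Polynomial.evalRingHom ((t : ℂ))) = B + (t : ℂ) • Matrix.diagonal d := by
      ext i j
      by_cases hij : i = j
      · subst hij
        rw [Matrix.map_apply]
        simp only [Matrix.map_apply, hM, if_pos rfl, Matrix.add_apply, Matrix.smul_apply,
          Matrix.diagonal_apply_eq, Polynomial.coe_evalRingHom, Polynomial.eval_add,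
          Polynomial.eval_mul, Polynomial.eval_C, Polynomial.eval_X, smul_eq_mul, if_true,
          eq_self_iff_true]
        ring
      · rw [Matrix.map_apply]
        simp [hM, Matrix.map_apply, hij, Matrix.diagonal_apply_ne _ hij]
    have hmap := RingHom.map_det (Polynomial.evalRingHom ((t : ℂ))) M
    rw [RingHom.mapMatrix_apply] at hmap
    rw [hdets, ← hMeval, ← hmap]
    simp
end
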